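/- If m ≥ 3, then the minimum quality q_min is non-decreasing as a set function on finite subsets of {1,…,N} × {1,…,m}: for all S ⊆ T, q_min(S) ≤ q_min(T). -/

import Mathlib

/-- Temporal distance between slots `j` and `e`. -/
def tdist (j e : ℕ) : ℕ := ((j : ℤ) - (e : ℤ)).natAbs

/-- Padded `k`-NN distance sum `I_k^S(j)`. -/
def Ik (m k : ℕ) (S : Finset ℕ) (j : ℕ) : ℕ :=
  if k ≤ S.card then
    (((S.val.map (fun e => tdist j e)).sort (· ≤ ·)).take k).sum
  else
    (S.val.map (fun e => tdist j e)).sum + (k - S.card) * m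

/-- Interpolation error ratio `ρ^S(j)`. -/
noncomputable def rho (m k : ℕ) (S : Finset ℕ) (j : ℕ) : ℝ :=
  if j ∈ S then 0 else (Ik m k S j : ℝ) / ((k : ℝ) * (m : ℝ))

/-- Subtask finishing probability `p^S(j)`. -/
noncomputable def prob (m k : ℕ) (S : Finset ℕ) (j : ℕ) : ℝ :=
  (1 / (m : ℝ)) * (1 - rho m k S j)

/-- Task quality `q(S)` (note `Real.logb 2 0 = 0`, so the convention
`0 · log₂ 0 = 0` holds definitionally). -/
noncomputable def quality (m k : ℕ) (S : Finset ℕ) : ℝ :=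
  ∑ j ∈ Finset.Icc 1 m, -(prob m k S j * Real.logb 2 (prob m k S j))

/-- The set of slots assigned within task `i`. -/
def taskSlice (S : Finset (ℕ × ℕ)) (i : ℕ) : Finset ℕ :=
  (S.filter (fun x => x.1 = i)).image Prod.snd

/-- The summation quality `q_sum`. -/
noncomputable def qsum (m k N : ℕ) (S : Finset (ℕ × ℕ)) : ℝ :=
  ∑ i ∈ Finset.Icc 1 N, quality m k (taskSlice S i)

/-- The minimum quality `q_min`. -/
noncomputable def qmin (m k N : ℕ) (hN : 1 ≤ N) (S : Finset (ℕ × ℕ)) : ℝ :=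
  (Finset.Icc 1 N).inf' (Finset.nonempty_Icc.mpr hN)
    (fun i => quality m k (taskSlice S i))

open List

lemma take_sum_cons_le : ∀ (k : ℕ) (l : List ℕ) (c : ℕ), l.Pairwise (· ≤ ·) →
    (∀ x ∈ l, c ≤ x) → k ≤ l.length → ((c :: l).take k).sum ≤ (l.take k).sum := by
  intro k
  induction k with
  | zero => simp
  | succ k ih =>
    intro l c hs hc hk
    cases l with
    | nil => simp at hk
    | cons d t =>
      simp only [take_succ_cons, List.sum_cons]
      have h1 : (t.take k).sum + c ≤ (t.take k).sum + d := by
        have := hc d (by simp); omega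
      have h2 := ih t d (hs.of_cons) (fun x hx => (pairwise_cons.mp hs).1 x hx)
        (by simpa using hk)
      omega

lemma take_sum_orderedInsert_le : ∀ (l : List ℕ) (k a : ℕ), l.Pairwise (· ≤ ·) →
    k ≤ l.length →
    ((l.orderedInsert (· ≤ ·) a).take k).sum ≤ (l.take k).sum := by
  intro l
  induction l with
  | nil => intro k a _ hk
           have : k = 0 := by simpa using hk
           simp [this]
  | cons b t ih =>
    intro k a hs hk
    cases k with
    | zero => simp
    | succ k =>
      by_cases hab : a ≤ b
      · simp only [List.orderedInsert, if_pos hab, take_succ_cons, List.sum_cons]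
        have h1 := take_sum_cons_le k t b (hs.of_cons)
          (fun x hx => (pairwise_cons.mp hs).1 x hx) (by simpa using hk)
        omega
      · simp only [List.orderedInsert, if_neg hab, take_succ_cons, List.sum_cons]
        have := ih k a hs.of_cons (by simpa using hk)
        omega

lemma sort_cons_eq (a : ℕ) (M : Multiset ℕ) :
    (a ::ₘ M).sort (· ≤ ·) = (M.sort (· ≤ ·)).orderedInsert (· ≤ ·) a := by
  have h1 : (a ::ₘ M).sort (· ≤ ·) ~ a :: M.sort (· ≤ ·) := by
    rw [← Multiset.coe_eq_coe, Multiset.sort_eq, ← Multiset.cons_coe, Multiset.sort_eq]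
  exact List.Perm.eq_of_pairwise' (Multiset.pairwise_sort _ _)
    ((Multiset.pairwise_sort M _).orderedInsert _ _) (h1.trans (List.perm_orderedInsert _ _ _).symm)

/-- Unified padded k-NN sum on multisets. -/
def padSum (m k : ℕ) (M : Multiset ℕ) : ℕ :=
  if k ≤ Multiset.card M then ((M.sort (· ≤ ·)).take k).sum
  else M.sum + (k - Multiset.card M) * m

lemma sort_length (M : Multiset ℕ) : (M.sort (· ≤ ·)).length = Multiset.card M := by
  rw [← Multiset.coe_card, Multiset.sort_eq]

lemma sort_sum (M : Multiset ℕ) : (M.sort (· ≤ ·)).sum = M.sum := by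
  rw [← Multiset.sum_coe, Multiset.sort_eq]

lemma padSum_cons_le (m k d : ℕ) (M : Multiset ℕ) (hd : d ≤ m) :
    padSum m k (d ::ₘ M) ≤ padSum m k M := by
  unfold padSum
  rw [Multiset.card_cons]
  rcases lt_trichotomy k (Multiset.card M + 1) with h | h | h
  · have hk : k ≤ Multiset.card M := by omega
    rw [if_pos (by omega), if_pos hk, sort_cons_eq]
    exact take_sum_orderedInsert_le _ _ _ (Multiset.pairwise_sort _ _)
      (by rw [sort_length]; omega)
  · rw [if_pos (by omega), if_neg (by omega)]
    have hlen : ((d ::ₘ M).sort (· ≤ ·)).length ≤ k := by rw [sort_length, Multiset.card_cons]; omega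
    rw [List.take_of_length_le hlen, sort_sum, Multiset.sum_cons]
    have : k - Multiset.card M = 1 := by omega
    rw [this]; omega
  · rw [if_neg (by omega), if_neg (by omega), Multiset.sum_cons]
    have h1 : k - Multiset.card M = (k - (Multiset.card M + 1)) + 1 := by omega
    rw [h1, add_mul, one_mul]
    omega

lemma padSum_anti (m k : ℕ) {M M' : Multiset ℕ} (h : M ≤ M')
    (hm : ∀ x ∈ M', x ≤ m) : padSum m k M' ≤ padSum m k M := by
  obtain ⟨D, rfl⟩ := Multiset.le_iff_exists_add.mp h
  have hD : ∀ x ∈ D, x ≤ m := fun x hx => hm x (by simp [hx])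
  clear h hm
  induction D using Multiset.induction with
  | empty => simp
  | cons d D ih =>
    have h1 : M + d ::ₘ D = d ::ₘ (M + D) := by
      rw [Multiset.add_cons]
    rw [h1]
    exact le_trans (padSum_cons_le m k d _ (hD d (by simp)))
      (ih (fun x hx => hD x (by simp [hx])))

lemma padSum_le (m k : ℕ) (M : Multiset ℕ) (hm : ∀ x ∈ M, x ≤ m) :
    padSum m k M ≤ k * m := by
  unfold padSum
  split_ifs with h
  · calc ((M.sort (· ≤ ·)).take k).sum
        ≤ ((M.sort (· ≤ ·)).take k).length • m := by
          apply List.sum_le_card_nsmul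
          intro x hx
          have hx2 := List.mem_of_mem_take hx
          rw [Multiset.mem_sort] at hx2
          exact hm x hx2
      _ ≤ k * m := by
          simp only [smul_eq_mul]
          exact Nat.mul_le_mul_right m (by simpa using List.length_take_le k _)
  · have h1 : M.sum ≤ Multiset.card M • m := Multiset.sum_le_card_nsmul M m hm
    have h2 : Multiset.card M * m + (k - Multiset.card M) * m = k * m := by
      rw [← add_mul]; congr 1; omega
    simp only [smul_eq_mul] at h1
    omega

lemma negMulLog_mono' {a b : ℝ} (ha : 0 ≤ a) (hab : a ≤ b) (hb : b ≤ (Real.exp 1)⁻¹) :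
    -(a * Real.log a) ≤ -(b * Real.log b) := by
  rcases eq_or_lt_of_le ha with rfl | ha'
  · rcases eq_or_lt_of_le hab with rfl | hb'
    · exact le_refl _
    · have hlogb : Real.log b ≤ 0 := by
        apply Real.log_nonpos hb'.le
        calc b ≤ (Real.exp 1)⁻¹ := hb
          _ ≤ 1 := by
            rw [inv_le_one_iff₀]
            right
            linarith [Real.add_one_le_exp 1]
      nlinarith
  · have hb0 : 0 < b := lt_of_lt_of_le ha' hab
    have hlogb : Real.log b ≤ -1 := by
      calc Real.log b ≤ Real.log (Real.exp 1)⁻¹ := Real.log_le_log hb0 hb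
        _ = -1 := by rw [Real.log_inv, Real.log_exp]
    have hba : Real.log (b / a) ≤ b / a - 1 :=
      Real.log_le_sub_one_of_pos (by positivity)
    have hlogdiv : Real.log (b / a) = Real.log b - Real.log a :=
      Real.log_div (ne_of_gt hb0) (ne_of_gt ha')
    have key : a * Real.log b - a * Real.log a ≤ b - a := by
      have h1 := mul_le_mul_of_nonneg_left hba ha'.le
      rw [hlogdiv, mul_sub, mul_sub, mul_div_cancel₀ b (ne_of_gt ha'), mul_one] at h1
      linarith
    have h2 := mul_le_mul_of_nonneg_left hlogb (sub_nonneg.mpr hab)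
    nlinarith

lemma ent_mono {a b : ℝ} (ha : 0 ≤ a) (hab : a ≤ b) (hb : b ≤ (Real.exp 1)⁻¹) :
    -(a * Real.logb 2 a) ≤ -(b * Real.logb 2 b) := by
  have h := negMulLog_mono' ha hab hb
  have h2 : (0 : ℝ) < Real.log 2 := Real.log_pos (by norm_num)
  have e1 : -(a * Real.logb 2 a) = (-(a * Real.log a)) / Real.log 2 := by
    rw [Real.logb]; ring
  have e2 : -(b * Real.logb 2 b) = (-(b * Real.log b)) / Real.log 2 := by
    rw [Real.logb]; ring
  rw [e1, e2]
  gcongr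

lemma Ik_eq_padSum (m k : ℕ) (S : Finset ℕ) (j : ℕ) :
    Ik m k S j = padSum m k (S.val.map (fun e => tdist j e)) := by
  unfold Ik padSum
  rw [Multiset.card_map]
  rfl

lemma tdist_le {m j e : ℕ} (hj : j ∈ Finset.Icc 1 m) (he : e ∈ Finset.Icc 1 m) :
    tdist j e ≤ m := by
  rw [Finset.mem_Icc] at hj he
  unfold tdist
  omega

lemma map_tdist_le {m j : ℕ} (S : Finset ℕ) (hS : S ⊆ Finset.Icc 1 m)
    (hj : j ∈ Finset.Icc 1 m) :
    ∀ x ∈ S.val.map (fun e => tdist j e), x ≤ m := by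
  intro x hx
  obtain ⟨e, he, rfl⟩ := Multiset.mem_map.mp hx
  exact tdist_le hj (hS he)

lemma Ik_anti {m k : ℕ} {S T : Finset ℕ} (hST : S ⊆ T)
    (hT : T ⊆ Finset.Icc 1 m) {j : ℕ} (hj : j ∈ Finset.Icc 1 m) :
    Ik m k T j ≤ Ik m k S j := by
  rw [Ik_eq_padSum, Ik_eq_padSum]
  exact padSum_anti m k (Multiset.map_le_map (Finset.val_le_iff.mpr hST))
    (map_tdist_le T hT hj)

lemma Ik_le {m k : ℕ} {S : Finset ℕ} (hS : S ⊆ Finset.Icc 1 m) {j : ℕ}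
    (hj : j ∈ Finset.Icc 1 m) : Ik m k S j ≤ k * m := by
  rw [Ik_eq_padSum]
  exact padSum_le m k _ (map_tdist_le S hS hj)

lemma rho_nonneg (m k : ℕ) (S : Finset ℕ) (j : ℕ) : 0 ≤ rho m k S j := by
  unfold rho
  split_ifs
  · exact le_refl 0
  · positivity

lemma rho_le_one {m k : ℕ} (hm : 1 ≤ m) (hk : 1 ≤ k) {S : Finset ℕ}
    (hS : S ⊆ Finset.Icc 1 m) {j : ℕ} (hj : j ∈ Finset.Icc 1 m) :
    rho m k S j ≤ 1 := by
  unfold rho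
  split_ifs
  · exact zero_le_one
  · rw [div_le_one (by positivity)]
    calc (Ik m k S j : ℝ) ≤ ((k * m : ℕ) : ℝ) := by
          exact_mod_cast Ik_le hS hj
      _ = (k : ℝ) * (m : ℝ) := by push_cast; ring

lemma rho_anti {m k : ℕ} {S T : Finset ℕ} (hST : S ⊆ T)
    (hT : T ⊆ Finset.Icc 1 m) {j : ℕ} (hj : j ∈ Finset.Icc 1 m) :
    rho m k T j ≤ rho m k S j := by
  by_cases hjT : j ∈ T
  · rw [rho, if_pos hjT]
    exact rho_nonneg m k S j
  · have hjS : j ∉ S := fun h => hjT (hST h)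
    rw [rho, if_neg hjT, rho, if_neg hjS]
    have h := Ik_anti hST hT hj (k := k)
    have h2 : ((Ik m k T j : ℕ) : ℝ) ≤ ((Ik m k S j : ℕ) : ℝ) := by exact_mod_cast h
    gcongr

lemma prob_mono {m k : ℕ} {S T : Finset ℕ} (hST : S ⊆ T)
    (hT : T ⊆ Finset.Icc 1 m) {j : ℕ} (hj : j ∈ Finset.Icc 1 m) :
    prob m k S j ≤ prob m k T j := by
  unfold prob
  have h := rho_anti hST hT hj (k := k)
  have hm0 : (0 : ℝ) ≤ 1 / (m : ℝ) := by positivity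
  nlinarith

lemma prob_nonneg {m k : ℕ} (hm : 1 ≤ m) (hk : 1 ≤ k) {S : Finset ℕ}
    (hS : S ⊆ Finset.Icc 1 m) {j : ℕ} (hj : j ∈ Finset.Icc 1 m) :
    0 ≤ prob m k S j := by
  unfold prob
  have := rho_le_one hm hk hS hj
  have hm0 : (0 : ℝ) ≤ 1 / (m : ℝ) := by positivity
  nlinarith

lemma prob_le {m k : ℕ} {S : Finset ℕ} (j : ℕ) :
    prob m k S j ≤ 1 / (m : ℝ) := by
  unfold prob
  have := rho_nonneg m k S j
  have hm0 : (0 : ℝ) ≤ 1 / (m : ℝ) := by positivity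
  nlinarith

lemma quality_mono {m k : ℕ} (hm : 3 ≤ m) (hk : 1 ≤ k) {A B : Finset ℕ}
    (hAB : A ⊆ B) (hB : B ⊆ Finset.Icc 1 m) :
    quality m k A ≤ quality m k B := by
  have hA : A ⊆ Finset.Icc 1 m := hAB.trans hB
  have hm1 : 1 ≤ m := by omega
  apply Finset.sum_le_sum
  intro j hj
  apply ent_mono
  · exact prob_nonneg hm1 hk hA hj
  · exact prob_mono hAB hB hj
  · calc prob m k B j ≤ 1 / (m : ℝ) := prob_le j
      _ ≤ (Real.exp 1)⁻¹ := by
        rw [one_div]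
        apply inv_anti₀ (Real.exp_pos 1)
        calc Real.exp 1 ≤ 2.7182818286 := Real.exp_one_lt_d9.le
          _ ≤ 3 := by norm_num
          _ ≤ (m : ℝ) := by exact_mod_cast hm

lemma taskSlice_mono {S T : Finset (ℕ × ℕ)} (h : S ⊆ T) (i : ℕ) :
    taskSlice S i ⊆ taskSlice T i :=
  Finset.image_subset_image (Finset.filter_subset_filter _ h)

lemma taskSlice_subset {N m : ℕ} {T : Finset (ℕ × ℕ)}
    (hT : T ⊆ Finset.Icc 1 N ×ˢ Finset.Icc 1 m) (i : ℕ) :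
    taskSlice T i ⊆ Finset.Icc 1 m := by
  intro x hx
  simp only [taskSlice, Finset.mem_image, Finset.mem_filter] at hx
  obtain ⟨p, ⟨hp, _⟩, rfl⟩ := hx
  exact (Finset.mem_product.mp (hT hp)).2

/-- If `m ≥ 3`, the minimum quality is non-decreasing. -/
theorem qmin_nondecreasing (m k N : ℕ) (hm : 3 ≤ m) (hk : 1 ≤ k) (hN : 1 ≤ N)
    (S T : Finset (ℕ × ℕ)) (hT : T ⊆ Finset.Icc 1 N ×ˢ Finset.Icc 1 m)
    (hST : S ⊆ T) :
    qmin m k N hN S ≤ qmin m k N hN T := by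
  apply Finset.le_inf'
  intro i hi
  exact le_trans (Finset.inf'_le _ hi)
    (quality_mono hm hk (taskSlice_mono hST i) (taskSlice_subset hT i))
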